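/- arXiv:math/9901061 — 2 statements merged into one kernel-verified Lean document; each statement's English description precedes it below -/
import Mathlib

section
/- Let A be a ℂ(q)-algebra and let x, X ∈ A satisfy X·x = q^{-2}·x·X + (1 - q^{-2})·X². Define S(X) = z·(X - x) formally, i.e. consider the element z·(X - x) in A[z]. Then for every n ≥ 0, (z(X - x))^n = z^n · ∑_{k=0}^{n} (-1)^k [n choose k]_q q^{-(n-k)(n-1)} x^k X^{n-k}, where [n choose k]_q is the quantum binomial coefficient. -/
open Finset

noncomputable def qq : RatFunc ℂ := RatFunc.X

noncomputable def qint (m : ℕ) : RatFunc ℂ := (qq ^ m - qq⁻¹ ^ m) / (qq - qq⁻¹)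

noncomputable def qfact : ℕ → RatFunc ℂ
  | 0 => 1
  | n + 1 => qint (n + 1) * qfact n

noncomputable def qbinom (n r : ℕ) : RatFunc ℂ :=
  if r ≤ n then qfact n / (qfact (n - r) * qfact r) else 0



lemma qq_ne_zero : qq ≠ 0 := by
  simpa [qq] using RatFunc.X_ne_zero (K := ℂ)

lemma qq_pow_ne_one {m : ℕ} (hm : m ≠ 0) : qq ^ m ≠ 1 := by
  intro hcontra
  have : (Polynomial.X : Polynomial ℂ) ^ m = 1 := by
    apply RatFunc.algebraMap_injective ℂ
    simpa [qq, map_pow, RatFunc.algebraMap_X] using hcontra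
  have := congrArg Polynomial.natDegree this
  simp [Polynomial.natDegree_X_pow] at this
  exact hm this

lemma qden_ne : qq - qq⁻¹ ≠ 0 := by
  intro hc
  have h1 : qq = qq⁻¹ := by linear_combination hc
  have : qq ^ 2 = 1 := by
    have := congrArg (· * qq) h1
    simpa [inv_mul_cancel₀ qq_ne_zero, sq, eq_comm] using this.symm
  exact qq_pow_ne_one (by norm_num) this

lemma qint_ne_zero {m : ℕ} (hm : m ≠ 0) : qint m ≠ 0 := by
  have hnum : qq ^ m - qq⁻¹ ^ m ≠ 0 := by
    intro hc
    have h1 : qq ^ m = (qq ^ m)⁻¹ := by rw [← inv_pow]; linear_combination hc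
    have : qq ^ (2 * m) = 1 := by
      have := congrArg (· * qq ^ m) h1
      simpa [inv_mul_cancel₀ (pow_ne_zero m qq_ne_zero), two_mul, pow_add, eq_comm] using this.symm
    exact qq_pow_ne_one (by omega) this
  exact div_ne_zero hnum qden_ne

lemma qfact_ne_zero (n : ℕ) : qfact n ≠ 0 := by
  induction n with
  | zero => simp [qfact]
  | succ n ih => exact mul_ne_zero (qint_ne_zero (Nat.succ_ne_zero n)) ih

lemma qint_add (a b : ℕ) : qint (a + b) = qq ^ a * qint b + qq⁻¹ ^ b * qint a := by
  unfold qint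
  rw [← mul_div_assoc, ← mul_div_assoc, ← add_div]
  congr 1
  rw [pow_add, pow_add]
  ring

lemma qbinom_pascal (k j : ℕ) :
    qbinom (k + j + 2) (k + 1)
      = qq ^ (k + 1) * qbinom (k + j + 1) (k + 1) + qq⁻¹ ^ (j + 1) * qbinom (k + j + 1) k := by
  have h1 : qfact (k + j + 2) = qint (k + j + 2) * qfact (k + j + 1) := rfl
  have h2 : qfact (j + 1) = qint (j + 1) * qfact j := rfl
  have h3 : qfact (k + 1) = qint (k + 1) * qfact k := rfl
  have hq := qint_add (k + 1) (j + 1)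
  have e1 : k + 1 + (j + 1) = k + j + 2 := by omega
  rw [e1] at hq
  unfold qbinom
  rw [if_pos (by omega), if_pos (by omega), if_pos (by omega)]
  have e2 : k + j + 2 - (k + 1) = j + 1 := by omega
  have e3 : k + j + 1 - (k + 1) = j := by omega
  have e4 : k + j + 1 - k = j + 1 := by omega
  rw [e2, e3, e4, h1, h2, h3]
  have n1 : qint (j + 1) ≠ 0 := qint_ne_zero (by omega)
  have n2 : qint (k + 1) ≠ 0 := qint_ne_zero (by omega)
  have f1 : qfact j ≠ 0 := qfact_ne_zero j
  have f2 : qfact k ≠ 0 := qfact_ne_zero k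
  have f3 : qfact (k + j + 1) ≠ 0 := qfact_ne_zero _
  set a := qint (j + 1) with ha
  set b := qint (k + 1) with hb
  set F := qfact (k + j + 1) with hF
  set Fj := qfact j with hFj
  set Fk := qfact k with hFk
  rw [← mul_div_assoc, ← mul_div_assoc,
    div_add_div _ _ (mul_ne_zero f1 (mul_ne_zero n2 f2)) (mul_ne_zero (mul_ne_zero n1 f1) f2),
    div_eq_div_iff (mul_ne_zero (mul_ne_zero n1 f1) (mul_ne_zero n2 f2))
      (mul_ne_zero (mul_ne_zero f1 (mul_ne_zero n2 f2)) (mul_ne_zero (mul_ne_zero n1 f1) f2)),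
    hq]
  ring

lemma qbinom_self (n : ℕ) : qbinom n n = 1 := by
  unfold qbinom
  rw [if_pos le_rfl, Nat.sub_self]
  show qfact n / (1 * qfact n) = 1
  rw [one_mul, div_self (qfact_ne_zero n)]

lemma qbinom_zero (n : ℕ) : qbinom n 0 = 1 := by
  unfold qbinom
  rw [if_pos (Nat.zero_le n), Nat.sub_zero]
  show qfact n / (qfact n * 1) = 1
  rw [mul_one, div_self (qfact_ne_zero n)]

lemma aux1 (m a : ℕ) : qq ^ m * qq⁻¹ ^ (m + a) = qq⁻¹ ^ a := by
  rw [pow_add, ← mul_assoc, ← mul_pow, mul_inv_cancel₀ qq_ne_zero, one_pow, one_mul]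

/-- the coefficient -/
noncomputable def D (n k : ℕ) : RatFunc ℂ :=
  (-1) ^ k * qbinom n k * qq⁻¹ ^ ((n - k) * (n - 1))

lemma D_rec (k j : ℕ) :
    D (k + j + 2) (k + 1)
      = D (k + j + 1) (k + 1) * qq⁻¹ ^ (2 * j) - D (k + j + 1) k * qq⁻¹ ^ (2 * (j + 1)) := by
  unfold D
  have e1 : k + j + 2 - (k + 1) = j + 1 := by omega
  have e2 : k + j + 2 - 1 = k + j + 1 := by omega
  have e3 : k + j + 1 - (k + 1) = j := by omega
  have e4 : k + j + 1 - k = j + 1 := by omega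
  have e5 : k + j + 1 - 1 = k + j := by omega
  rw [e1, e2, e3, e4, e5, qbinom_pascal]
  have p1 : qq ^ (k + 1) * qq⁻¹ ^ ((j + 1) * (k + j + 1))
      = qq⁻¹ ^ (j * (k + j)) * qq⁻¹ ^ (2 * j) := by
    rw [show (j + 1) * (k + j + 1) = (k + 1) + (j * (k + j) + 2 * j) from by ring, aux1, pow_add]
  have p2 : qq⁻¹ ^ (j + 1) * qq⁻¹ ^ ((j + 1) * (k + j + 1))
      = qq⁻¹ ^ ((j + 1) * (k + j)) * qq⁻¹ ^ (2 * (j + 1)) := by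
    rw [← pow_add, ← pow_add]
    congr 1
    ring
  linear_combination ((-1 : RatFunc ℂ) ^ (k + 1) * qbinom (k + j + 1) (k + 1)) * p1
    + ((-1 : RatFunc ℂ) ^ (k + 1) * qbinom (k + j + 1) k) * p2

lemma D_zero (n : ℕ) : D (n + 1) 0 = D n 0 * qq⁻¹ ^ (2 * n) := by
  unfold D
  rw [qbinom_zero, qbinom_zero]
  simp only [pow_zero, one_mul, mul_one, Nat.sub_zero]
  rw [← pow_add]
  congr 1
  cases n with
  | zero => rfl
  | succ m => simp only [Nat.add_sub_cancel]; ring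

lemma D_last (n : ℕ) : D (n + 1) (n + 1) = -(D n n * qq⁻¹ ^ (2 * (n - n))) := by
  unfold D
  rw [qbinom_self, qbinom_self, Nat.sub_self, Nat.sub_self]
  simp [pow_succ]


lemma D_rec' {n k : ℕ} (hk : k + 1 ≤ n) :
    D (n + 1) (k + 1)
      = D n (k + 1) * qq⁻¹ ^ (2 * (n - (k + 1))) - D n k * qq⁻¹ ^ (2 * (n - k)) := by
  obtain ⟨j, rfl⟩ : ∃ j, n = k + j + 1 := ⟨n - (k + 1), by omega⟩
  have e1 : k + j + 1 - (k + 1) = j := by omega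
  have e2 : k + j + 1 - k = j + 1 := by omega
  rw [e1, e2, show k + j + 1 + 1 = k + j + 2 from rfl]
  exact D_rec k j

section Alg
variable {A : Type*} [Ring A] [Algebra (RatFunc ℂ) A] (x X : A)
variable (h : X * x = algebraMap (RatFunc ℂ) A (qq⁻¹ ^ 2) * (x * X)
        + (1 - algebraMap (RatFunc ℂ) A (qq⁻¹ ^ 2)) * X ^ 2)

include h

lemma comm_pow (m : ℕ) : X ^ m * x
    = (qq⁻¹ ^ (2 * m)) • (x * X ^ m) + X ^ (m + 1) - (qq⁻¹ ^ (2 * m)) • X ^ (m + 1) := by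
  have h' : X * x = (qq⁻¹ ^ 2) • (x * X) + X ^ 2 - (qq⁻¹ ^ 2) • X ^ 2 := by
    rw [h, Algebra.smul_def, Algebra.smul_def, sub_mul, one_mul]
    ring_nf
    abel
  induction m with
  | zero => simp
  | succ m ih =>
    have step : X ^ (m + 1) * x = X * (X ^ m * x) := by
      rw [pow_succ', mul_assoc]
    rw [step, ih, mul_sub, mul_add, mul_smul_comm, mul_smul_comm, ← mul_assoc, h']
    rw [show (qq⁻¹ ^ 2 • (x * X) + X ^ 2 - qq⁻¹ ^ 2 • X ^ 2) * X ^ m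
        = (qq⁻¹ ^ 2) • (x * X ^ (m + 1)) + X ^ (m + 2) - (qq⁻¹ ^ 2) • X ^ (m + 2) from by
      rw [sub_mul, add_mul, smul_mul_assoc, smul_mul_assoc, mul_assoc, ← pow_succ', ← pow_add]
      ring_nf]
    simp only [smul_sub, smul_add, smul_smul, ← pow_add]
    rw [show 2 * m + 2 = 2 * (m + 1) from by omega]
    rw [show X * X ^ (m + 1) = X ^ (m + 2) from (pow_succ' X (m + 1)).symm]
    abel

lemma term_mul (k m : ℕ) : (x ^ k * X ^ m) * (X - x)
    = (qq⁻¹ ^ (2 * m)) • (x ^ k * X ^ (m + 1) - x ^ (k + 1) * X ^ m) := by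
  rw [mul_sub, mul_assoc, mul_assoc, comm_pow x X h m]
  simp only [mul_add, mul_sub, mul_smul_comm, smul_sub, ← mul_assoc, ← pow_succ, pow_succ']
  abel



lemma main_lemma (n : ℕ) :
    (X - x) ^ n = ∑ k ∈ Finset.range (n + 1), D n k • (x ^ k * X ^ (n - k)) := by
  induction n with
  | zero => simp [D, qbinom_self]
  | succ n ih =>
    have key : ∀ k ∈ Finset.range (n + 1), D n k • (x ^ k * X ^ (n - k)) * (X - x)
        = (D n k * qq⁻¹ ^ (2 * (n - k))) • (x ^ k * X ^ (n - k + 1))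
          - (D n k * qq⁻¹ ^ (2 * (n - k))) • (x ^ (k + 1) * X ^ (n - k)) := by
      intro k hk
      rw [smul_mul_assoc, term_mul x X h, smul_smul, smul_sub]
    rw [pow_succ, ih, Finset.sum_mul, Finset.sum_congr rfl key, Finset.sum_sub_distrib]
    rw [Finset.sum_range_succ'
      (fun k => (D n k * qq⁻¹ ^ (2 * (n - k))) • (x ^ k * X ^ (n - k + 1))) n]
    rw [Finset.sum_range_succ
      (fun k => (D n k * qq⁻¹ ^ (2 * (n - k))) • (x ^ (k + 1) * X ^ (n - k)))]
    rw [Finset.sum_range_succ'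
      (fun k => D (n + 1) k • (x ^ k * X ^ (n + 1 - k))) (n + 1)]
    rw [Finset.sum_range_succ
      (fun k => D (n + 1) (k + 1) • (x ^ (k + 1) * X ^ (n + 1 - (k + 1))))]
    have hS : ∑ k ∈ Finset.range n, D (n + 1) (k + 1) • (x ^ (k + 1) * X ^ (n + 1 - (k + 1)))
        = (∑ k ∈ Finset.range n,
            (D n (k + 1) * qq⁻¹ ^ (2 * (n - (k + 1)))) • (x ^ (k + 1) * X ^ (n - (k + 1) + 1)))
          - ∑ k ∈ Finset.range n,
            (D n k * qq⁻¹ ^ (2 * (n - k))) • (x ^ (k + 1) * X ^ (n - k)) := by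
      rw [← Finset.sum_sub_distrib]
      refine Finset.sum_congr rfl fun k hk => ?_
      have hkn : k < n := Finset.mem_range.mp hk
      rw [D_rec' (by omega), sub_smul,
        show n + 1 - (k + 1) = n - k from by omega,
        show n - (k + 1) + 1 = n - k from by omega]
    rw [hS, D_last n, D_zero n]
    simp only [pow_zero, one_mul, Nat.sub_zero, Nat.sub_self, mul_one,
      Nat.add_sub_cancel, neg_smul]
    abel

end Alg

/-- (z(X-x))ⁿ = zⁿ ∑ₖ (-1)ᵏ [n k]_q q^{-(n-k)(n-1)} xᵏ X^{n-k} in A[z]. -/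
theorem stmt3 {A : Type*} [Ring A] [Algebra (RatFunc ℂ) A] (x X : A)
    (h : X * x = algebraMap (RatFunc ℂ) A (qq⁻¹ ^ 2) * (x * X)
        + (1 - algebraMap (RatFunc ℂ) A (qq⁻¹ ^ 2)) * X ^ 2) (n : ℕ) :
    (Polynomial.X * (Polynomial.C X - Polynomial.C x)) ^ n
      = Polynomial.X ^ n * Polynomial.C (∑ k ∈ Finset.range (n + 1),
          algebraMap (RatFunc ℂ) A ((-1) ^ k * qbinom n k * qq⁻¹ ^ ((n - k) * (n - 1)))
            * (x ^ k * X ^ (n - k))) := by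
  rw [(Polynomial.commute_X (Polynomial.C X - Polynomial.C x)).mul_pow, ← map_sub, ← map_pow,
    main_lemma x X h n]
  congr 1
  congr 1
  refine Finset.sum_congr rfl fun k _ => ?_
  rw [Algebra.smul_def]
  rfl
end

section
/- Let A be a ℂ(q)-algebra with elements h, X, x such that [h, X] = λ(X − x) for some central invertible λ, and X·x = q^{-2}xX + (1−q^{-2})X². Then for every n ≥ 1, [h, X^n] = λ·(∑_{k=0}^{n-1} q^{-2k})·(X^n − x·X^{n-1}). -/
open Finset

/-- if `[h,X] = λ(X−x)` with `λ` central invertible and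
`X·x = q⁻²xX + (1−q⁻²)X²`, then `[h,Xⁿ] = λ(∑_{k<n} q^{−2k})(Xⁿ − xXⁿ⁻¹)`. -/
theorem stmt12 {A : Type*} [Ring A] [Algebra (RatFunc ℂ) A] (h X x l : A)
    (hcentral : ∀ a : A, l * a = a * l) (hunit : IsUnit l)
    (hcomm : h * X - X * h = l * (X - x))
    (hXx : X * x = algebraMap (RatFunc ℂ) A (qq⁻¹ ^ 2) * (x * X)
        + (1 - algebraMap (RatFunc ℂ) A (qq⁻¹ ^ 2)) * X ^ 2) :
    ∀ n : ℕ, 1 ≤ n →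
      h * X ^ n - X ^ n * h
        = l * ((∑ k ∈ Finset.range n, algebraMap (RatFunc ℂ) A (qq⁻¹ ^ (2 * k)))
            * (X ^ n - x * X ^ (n - 1))) := by
  set Q : A := algebraMap (RatFunc ℂ) A (qq⁻¹ ^ 2) with hQ
  have hQc : ∀ a : A, Q * a = a * Q := fun a => Algebra.commutes _ a
  have hQpc : ∀ (m : ℕ) (a : A), Q ^ m * a = a * Q ^ m := fun m a =>
    ((Commute.pow_left (hQc a) m) : _)
  -- rewrite the sum in terms of powers of Q
  have hsum : ∀ n : ℕ, (∑ k ∈ Finset.range n, algebraMap (RatFunc ℂ) A (qq⁻¹ ^ (2 * k)))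
      = ∑ k ∈ Finset.range n, Q ^ k := by
    intro n
    refine Finset.sum_congr rfl fun k _ => ?_
    rw [hQ, ← map_pow, ← pow_mul]
  -- key commutation: X^n * x
  have hpow : ∀ n : ℕ, X ^ n * x = Q ^ n * (x * X ^ n) + (1 - Q ^ n) * X ^ (n + 1) := by
    intro n
    induction n with
    | zero => simp
    | succ m ih =>
      have key : ∀ a b : A, a * (Q * b) = Q * (a * b) := fun a b => by
        rw [← mul_assoc, ← hQc, mul_assoc]
      have e1 : X ^ (m + 1) * x = X ^ m * (X * x) := by rw [pow_succ, mul_assoc]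
      have e2 : X ^ m * (X * x)
          = Q * (X ^ m * (x * X)) + X ^ m * X ^ 2 - Q * (X ^ m * X ^ 2) := by
        rw [hXx, sub_mul, one_mul, mul_add, mul_sub, key, key]
        noncomm_ring
      have e3 : X ^ m * (x * X)
          = (Q ^ m * (x * X ^ m) + (1 - Q ^ m) * X ^ (m + 1)) * X := by
        rw [← mul_assoc, ih]
      rw [e1, e2, e3, pow_succ Q m]
      noncomm_ring
      simp only [← mul_assoc, ← pow_succ, ← pow_succ']
      noncomm_ring
  intro n hn
  induction n, hn using Nat.le_induction with
  | base =>
    simp only [pow_one, Nat.sub_self, pow_zero, mul_one, Finset.range_one,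
      Finset.sum_singleton, Nat.mul_zero, map_one, one_mul]
    exact hcomm
  | succ n hn ih =>
    have step : h * X ^ (n + 1) - X ^ (n + 1) * h
        = (h * X ^ n - X ^ n * h) * X + X ^ n * (h * X - X * h) := by
      rw [pow_succ]; noncomm_ring
    rw [step, ih, hcomm, hsum, hsum]
    have hn1 : n - 1 + 1 = n := Nat.succ_pred_eq_of_pos hn
    have e5 : (X ^ n - x * X ^ (n - 1)) * X = X ^ (n + 1) - x * X ^ n := by
      rw [sub_mul, ← pow_succ, mul_assoc, ← pow_succ, hn1]
    have e6 : X ^ n * (X - x) = Q ^ n * (X ^ (n + 1) - x * X ^ n) := by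
      rw [mul_sub, ← pow_succ, hpow n, mul_sub]
      have : X ^ (n + 1) - (Q ^ n * (x * X ^ n) + (1 - Q ^ n) * X ^ (n + 1))
          = Q ^ n * X ^ (n + 1) - Q ^ n * (x * X ^ n) := by noncomm_ring
      rw [this]
    have e7 : X ^ n * (l * (X - x)) = l * (Q ^ n * (X ^ (n + 1) - x * X ^ n)) := by
      rw [← mul_assoc, ← hcentral (X ^ n), mul_assoc, e6]
    rw [e7]
    rw [mul_assoc, mul_assoc, e5]
    rw [Nat.add_sub_cancel, Finset.sum_range_succ]
    rw [← mul_add, ← add_mul]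
end
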